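/- Let n ≥ 1, let s be an n-bit string, let A be a set of n-bit strings with |A| = 2^q, let e : A → ZMod 2 be noise bits, and let ψ be the associated noisy quantum sample state. Then the probability of the algorithm outputting the true secret, P_S = |(W_{n+1} ψ)(s, 1)|², equals 2^{−(n+q+1)} · | ∑_{a ∈ A} χ(e(a)) |². -/

import Mathlib

open scoped BigOperators

/-- `χ(x) = (-1)^x` for a bit `x ∈ ZMod 2`. -/
noncomputable def chi (x : ZMod 2) : ℂ := (-1 : ℂ) ^ x.val

/-- The `(n+1)`-bit Walsh–Hadamard transform, where an `(n+1)`-bit string is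
identified with a pair of an `n`-bit string and a bit, and the dot product of
`(a, b)` and `(𝐤, k⋆)` is `a·𝐤 + b·k⋆`. -/
noncomputable def WH (n : ℕ) (f : ((Fin n → ZMod 2) × ZMod 2) → ℂ)
    (k : (Fin n → ZMod 2) × ZMod 2) : ℂ :=
  ((Real.sqrt (2 ^ (n + 1)) : ℝ) : ℂ)⁻¹ *
    ∑ j : (Fin n → ZMod 2) × ZMod 2,
      chi ((∑ i, j.1 i * k.1 i) + j.2 * k.2) * f j


/-- The success probability of the quantum NBLP algorithm:
`P_S = |(W ψ)(s, 1)|² = 2^{-(n+q+1)} |∑_{a ∈ A} χ(e(a))|²`. -/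
theorem success_probability (n q : ℕ) (hn : 1 ≤ n) (hq : q ≤ n)
    (s : Fin n → ZMod 2) (A : Finset (Fin n → ZMod 2)) (hA : A.card = 2 ^ q)
    (e : (Fin n → ZMod 2) → ZMod 2)
    (ψ : ((Fin n → ZMod 2) × ZMod 2) → ℂ)
    (hψ : ∀ a b, ψ (a, b) =
      if a ∈ A ∧ b = (∑ i, a i * s i) + e a then
        ((Real.sqrt (2 ^ q) : ℝ) : ℂ)⁻¹ else 0) :
    ‖WH n ψ (s, 1)‖ ^ 2 =
      ((2 : ℝ) ^ (n + q + 1))⁻¹ * ‖∑ a ∈ A, chi (e a)‖ ^ 2 := by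
  have key : (∑ j : (Fin n → ZMod 2) × ZMod 2,
      chi ((∑ i, j.1 i * (s, (1:ZMod 2)).1 i) + j.2 * (s, (1:ZMod 2)).2) * ψ j)
      = ((Real.sqrt (2 ^ q) : ℝ) : ℂ)⁻¹ * ∑ a ∈ A, chi (e a) := by
    rw [Fintype.sum_prod_type]
    have hline : ∀ a : Fin n → ZMod 2,
        (∑ b : ZMod 2, chi ((∑ i, a i * s i) + b * 1) * ψ (a, b))
        = if a ∈ A then ((Real.sqrt (2 ^ q) : ℝ) : ℂ)⁻¹ * chi (e a) else 0 := by
      intro a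
      by_cases ha : a ∈ A
      · have hchi : chi ((∑ i, a i * s i) + ((∑ i, a i * s i) + e a)) = chi (e a) := by
          rw [← add_assoc, CharTwo.add_self_eq_zero, zero_add]
        simp only [hψ, ha, true_and, mul_one, mul_ite, mul_zero]
        rw [Finset.sum_ite_eq' Finset.univ ((∑ i, a i * s i) + e a)]
        simp only [Finset.mem_univ, if_true]
        rw [hchi, mul_comm]
      · simp [hψ, ha]
    rw [Finset.sum_congr rfl (fun a _ => hline a)]
    rw [Finset.sum_ite_mem, Finset.univ_inter, Finset.mul_sum]
  simp only [WH, key, norm_mul, norm_inv, Complex.norm_real, Real.norm_eq_abs, mul_pow]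
  have h1 : (0:ℝ) ≤ Real.sqrt (2 ^ (n + 1)) := Real.sqrt_nonneg _
  have h2 : (0:ℝ) ≤ Real.sqrt (2 ^ q) := Real.sqrt_nonneg _
  rw [abs_of_nonneg h1, abs_of_nonneg h2, inv_pow, inv_pow,
    Real.sq_sqrt (by positivity), Real.sq_sqrt (by positivity)]
  rw [show n + q + 1 = (n + 1) + q by ring, pow_add, mul_inv]
  ring
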